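/- Let F be a number field with ring of integers O_F, and let 𝔭 be a nonzero prime ideal of O_F. Let a ∈ O_F satisfy a ∈ 𝔭 and a ∉ 𝔭² (i.e., the 𝔭-adic valuation of a equals 1), and let γ ∈ O_F be such that the residue of γ in O_F/𝔭 is not a square. Then the quaternion algebra ℍ[F, a, γ] is a division algebra: every nonzero element is a unit. -/

import Mathlib

set_option synthInstance.maxHeartbeats 1000000
set_option maxHeartbeats 1000000

open Quaternion NumberField

section Aux

variable {F : Type*} [Field F] [NumberField F]
  (𝔭 : Ideal (𝓞 F)) [hprime : 𝔭.IsPrime] (hbot : 𝔭 ≠ ⊥)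

include hbot in
lemma aux_key0 {γ : 𝓞 F} (hγ : ¬ IsSquare (Ideal.Quotient.mk 𝔭 γ))
    {c d : 𝓞 F} (h : c ^ 2 - γ * d ^ 2 ∈ 𝔭) : c ∈ 𝔭 ∧ d ∈ 𝔭 := by
  haveI hmax : 𝔭.IsMaximal := Ideal.IsPrime.isMaximal hprime hbot
  letI : Field (𝓞 F ⧸ 𝔭) := Ideal.Quotient.field 𝔭
  have h0 : (Ideal.Quotient.mk 𝔭 c) ^ 2
      - Ideal.Quotient.mk 𝔭 γ * (Ideal.Quotient.mk 𝔭 d) ^ 2 = 0 := by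
    have := Ideal.Quotient.eq_zero_iff_mem.mpr h
    push_cast at this
    simpa using this
  by_cases hd : Ideal.Quotient.mk 𝔭 d = 0
  · have hc : Ideal.Quotient.mk 𝔭 c = 0 := by
      have h2 : (Ideal.Quotient.mk 𝔭 c) ^ 2 = 0 := by rw [hd] at h0; simpa using h0
      exact (pow_eq_zero_iff two_ne_zero).mp h2
    exact ⟨Ideal.Quotient.eq_zero_iff_mem.mp hc, Ideal.Quotient.eq_zero_iff_mem.mp hd⟩
  · exfalso
    apply hγ
    refine ⟨Ideal.Quotient.mk 𝔭 c / Ideal.Quotient.mk 𝔭 d, ?_⟩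
    field_simp
    linear_combination -h0

end Aux

section Aux2

variable {F : Type*} [Field F] [NumberField F]
  (𝔭 : Ideal (𝓞 F)) [hprime : 𝔭.IsPrime]

include hprime in
lemma aux_claimR (hbot : 𝔭 ≠ ⊥) {a γ : 𝓞 F} (ha1 : a ∈ 𝔭) (ha2 : a ∉ 𝔭 ^ 2)
    (hγ : ¬ IsSquare (Ideal.Quotient.mk 𝔭 γ)) :
    ∀ X Y Z W : Localization.AtPrime 𝔭,
      X ^ 2 - algebraMap (𝓞 F) (Localization.AtPrime 𝔭) a * Y ^ 2
        - algebraMap (𝓞 F) (Localization.AtPrime 𝔭) γ * Z ^ 2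
        + algebraMap (𝓞 F) (Localization.AtPrime 𝔭) a
          * algebraMap (𝓞 F) (Localization.AtPrime 𝔭) γ * W ^ 2 = 0 →
      X = 0 ∧ Y = 0 ∧ Z = 0 ∧ W = 0 := by
  set φ := algebraMap (𝓞 F) (Localization.AtPrime 𝔭) with hφ
  haveI : IsDiscreteValuationRing (Localization.AtPrime 𝔭) :=
    IsLocalization.AtPrime.isDiscreteValuationRing_of_dedekind_domain (𝓞 F) hbot _
  set m := IsLocalRing.maximalIdeal (Localization.AtPrime 𝔭) with hm
  have hmap : Ideal.map φ 𝔭 = m := Localization.AtPrime.map_eq_maximalIdeal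
  have hinj : Function.Injective φ :=
    IsLocalization.injective _ 𝔭.primeCompl_le_nonZeroDivisors
  have lemA : ∀ U T : Localization.AtPrime 𝔭, U ^ 2 - φ γ * T ^ 2 ∈ m → U ∈ m ∧ T ∈ m := by
    intro U T hUT
    obtain ⟨⟨c, s⟩, rfl⟩ := IsLocalization.mk'_surjective 𝔭.primeCompl U
    obtain ⟨⟨c', s'⟩, rfl⟩ := IsLocalization.mk'_surjective 𝔭.primeCompl T
    have hU : φ (s : 𝓞 F) * IsLocalization.mk' _ c s = φ c := IsLocalization.mk'_spec' _ c s
    have hT : φ (s' : 𝓞 F) * IsLocalization.mk' _ c' s' = φ c' :=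
      IsLocalization.mk'_spec' _ c' s'
    have key : φ (((s' : 𝓞 F) * c) ^ 2 - γ * ((s : 𝓞 F) * c') ^ 2)
        = φ ((s : 𝓞 F) * (s' : 𝓞 F)) ^ 2 * (IsLocalization.mk' _ c s ^ 2
            - φ γ * IsLocalization.mk' _ c' s' ^ 2) := by
      simp only [map_sub, map_mul, map_pow]
      linear_combination (-(φ (s' : 𝓞 F) ^ 2 * (φ c + φ (s : 𝓞 F) * IsLocalization.mk' _ c s))) * hU
        + (φ γ * φ (s : 𝓞 F) ^ 2 * (φ c' + φ (s' : 𝓞 F) * IsLocalization.mk' _ c' s')) * hT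
    have hmm : φ (((s' : 𝓞 F) * c) ^ 2 - γ * ((s : 𝓞 F) * c') ^ 2) ∈ m := by
      rw [key]; exact Ideal.mul_mem_left _ _ hUT
    have hmem : ((s' : 𝓞 F) * c) ^ 2 - γ * ((s : 𝓞 F) * c') ^ 2 ∈ 𝔭 := by
      have h7 : ((s' : 𝓞 F) * c) ^ 2 - γ * ((s : 𝓞 F) * c') ^ 2 ∈ Ideal.comap φ m :=
        Ideal.mem_comap.mpr hmm
      rwa [show Ideal.comap φ m = 𝔭 from Localization.AtPrime.comap_maximalIdeal] at h7
    obtain ⟨h1, h2⟩ := aux_key0 𝔭 hbot hγ hmem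
    have hc : c ∈ 𝔭 := (hprime.mem_or_mem h1).resolve_left s'.prop
    have hc' : c' ∈ 𝔭 := (hprime.mem_or_mem h2).resolve_left s.prop
    constructor
    · rw [← hmap]
      exact (IsLocalization.mk'_mem_map_algebraMap_iff 𝔭.primeCompl _ 𝔭 c s).mpr
        ⟨1, 𝔭.primeCompl.one_mem, by simpa using hc⟩
    · rw [← hmap]
      exact (IsLocalization.mk'_mem_map_algebraMap_iff 𝔭.primeCompl _ 𝔭 c' s').mpr
        ⟨1, 𝔭.primeCompl.one_mem, by simpa using hc'⟩
  have haM : φ a ∈ m := by rw [← hmap]; exact Ideal.mem_map_of_mem _ ha1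
  have haM2 : φ a ∉ m ^ 2 := by
    intro hmem
    apply ha2
    rw [← hmap, ← Ideal.map_pow] at hmem
    obtain ⟨⟨x, s⟩, hx⟩ := (IsLocalization.mem_map_algebraMap_iff 𝔭.primeCompl _).mp hmem
    rw [← map_mul] at hx
    have hax : a * (s : 𝓞 F) = x := hinj hx
    have has2 : a * (s : 𝓞 F) ∈ 𝔭 ^ 2 := hax ▸ x.prop
    have hP : Prime 𝔭 := (Ideal.isPrime_iff_bot_or_prime.mp hprime).resolve_left hbot
    have hdvd : 𝔭 ^ 2 ∣ Ideal.span {a} * Ideal.span {(s : 𝓞 F)} := by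
      rw [Ideal.span_singleton_mul_span_singleton]
      exact Ideal.dvd_iff_le.mpr ((Ideal.span_singleton_le_iff_mem _).mpr has2)
    have hnd : ¬ 𝔭 ∣ Ideal.span {(s : 𝓞 F)} := fun hd =>
      s.prop ((Ideal.span_singleton_le_iff_mem _).mp (Ideal.dvd_iff_le.mp hd))
    have h9 := hP.pow_dvd_of_dvd_mul_right 2 hnd hdvd
    exact (Ideal.span_singleton_le_iff_mem _).mp (Ideal.dvd_iff_le.mp h9)
  obtain ⟨ϖ, hϖ⟩ := IsDiscreteValuationRing.exists_irreducible (Localization.AtPrime 𝔭)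
  have hmspan : m = Ideal.span {ϖ} := hϖ.maximalIdeal_eq
  have hϖ0 : ϖ ≠ 0 := hϖ.ne_zero
  have step : ∀ X Y Z W : Localization.AtPrime 𝔭,
      X ^ 2 - φ a * Y ^ 2 - φ γ * Z ^ 2 + φ a * φ γ * W ^ 2 = 0 →
      X ∈ m ∧ Y ∈ m ∧ Z ∈ m ∧ W ∈ m := by
    intro X Y Z W heq
    have h1 : X ^ 2 - φ γ * Z ^ 2 ∈ m := by
      have hE : X ^ 2 - φ γ * Z ^ 2 = φ a * (Y ^ 2 - φ γ * W ^ 2) := by linear_combination heq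
      rw [hE]; exact Ideal.mul_mem_right _ _ haM
    obtain ⟨hX, hZ⟩ := lemA X Z h1
    have h2 : φ a * (Y ^ 2 - φ γ * W ^ 2) ∈ m ^ 2 := by
      have hE : φ a * (Y ^ 2 - φ γ * W ^ 2) = X ^ 2 - φ γ * Z ^ 2 := by linear_combination -heq
      rw [hE]
      exact sub_mem (Ideal.pow_mem_pow hX 2)
        (Ideal.mul_mem_left _ _ (Ideal.pow_mem_pow hZ 2))
    obtain ⟨s, hs⟩ : ∃ s, φ a = ϖ * s := by
      have := haM; rw [hmspan, Ideal.mem_span_singleton] at this; exact this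
    have hsunit : IsUnit s := by
      by_contra hsu
      apply haM2
      have hs' : s ∈ m := (IsLocalRing.mem_maximalIdeal s).mpr hsu
      have hϖm : ϖ ∈ m := by rw [hmspan]; exact Ideal.mem_span_singleton_self ϖ
      rw [hs, sq]
      exact Ideal.mul_mem_mul hϖm hs'
    have hE : Y ^ 2 - φ γ * W ^ 2 ∈ m := by
      rw [hmspan, Ideal.span_singleton_pow, Ideal.mem_span_singleton] at h2
      rw [hs] at h2
      have h3 : ϖ ^ 2 ∣ ϖ * (s * (Y ^ 2 - φ γ * W ^ 2)) := by
        rw [← mul_assoc]; exact h2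
      rw [sq] at h3
      have h4 : ϖ ∣ s * (Y ^ 2 - φ γ * W ^ 2) := (mul_dvd_mul_iff_left hϖ0).mp h3
      obtain ⟨t, ht⟩ := h4
      obtain ⟨v, hv⟩ := hsunit.exists_left_inv
      rw [hmspan, Ideal.mem_span_singleton]
      refine ⟨v * t, ?_⟩
      have : v * (s * (Y ^ 2 - φ γ * W ^ 2)) = v * (ϖ * t) := by rw [ht]
      calc Y ^ 2 - φ γ * W ^ 2 = (v * s) * (Y ^ 2 - φ γ * W ^ 2) := by rw [hv, one_mul]
        _ = v * (ϖ * t) := by rw [mul_assoc, this]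
        _ = ϖ * (v * t) := by ring
    obtain ⟨hY, hW⟩ := lemA Y W hE
    exact ⟨hX, hY, hZ, hW⟩
  have descent : ∀ (n : ℕ) (X Y Z W : Localization.AtPrime 𝔭),
      X ^ 2 - φ a * Y ^ 2 - φ γ * Z ^ 2 + φ a * φ γ * W ^ 2 = 0 →
      X ∈ Ideal.span {ϖ ^ n} ∧ Y ∈ Ideal.span {ϖ ^ n}
        ∧ Z ∈ Ideal.span {ϖ ^ n} ∧ W ∈ Ideal.span {ϖ ^ n} := by
    intro n
    induction n with
    | zero =>
      intro X Y Z W _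
      simp [Ideal.span_singleton_one]
    | succ n ih =>
      intro X Y Z W heq
      obtain ⟨hX, hY, hZ, hW⟩ := ih X Y Z W heq
      rw [Ideal.mem_span_singleton] at hX hY hZ hW
      obtain ⟨X1, rfl⟩ := hX
      obtain ⟨Y1, rfl⟩ := hY
      obtain ⟨Z1, rfl⟩ := hZ
      obtain ⟨W1, rfl⟩ := hW
      have heq1 : X1 ^ 2 - φ a * Y1 ^ 2 - φ γ * Z1 ^ 2 + φ a * φ γ * W1 ^ 2 = 0 := by
        have h4 : (ϖ ^ n) ^ 2 * (X1 ^ 2 - φ a * Y1 ^ 2 - φ γ * Z1 ^ 2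
            + φ a * φ γ * W1 ^ 2) = 0 := by linear_combination heq
        rcases mul_eq_zero.mp h4 with h | h
        · exact absurd h (pow_ne_zero 2 (pow_ne_zero n hϖ0))
        · exact h
      obtain ⟨hX1, hY1, hZ1, hW1⟩ := step _ _ _ _ heq1
      rw [hmspan, Ideal.mem_span_singleton] at hX1 hY1 hZ1 hW1
      obtain ⟨X2, rfl⟩ := hX1
      obtain ⟨Y2, rfl⟩ := hY1
      obtain ⟨Z2, rfl⟩ := hZ1
      obtain ⟨W2, rfl⟩ := hW1
      refine ⟨?_, ?_, ?_, ?_⟩ <;> rw [Ideal.mem_span_singleton]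
      · exact ⟨X2, by rw [pow_succ]; ring⟩
      · exact ⟨Y2, by rw [pow_succ]; ring⟩
      · exact ⟨Z2, by rw [pow_succ]; ring⟩
      · exact ⟨W2, by rw [pow_succ]; ring⟩
  intro X Y Z W heq
  have hzero : ∀ x : Localization.AtPrime 𝔭, (∀ n, x ∈ Ideal.span {ϖ ^ n}) → x = 0 := by
    intro x hx
    by_contra hx0
    obtain ⟨n, u, hu⟩ := IsDiscreteValuationRing.eq_unit_mul_pow_irreducible hx0 hϖ
    have h5 := hx (n + 1)
    rw [Ideal.mem_span_singleton, hu] at h5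
    rw [pow_succ, mul_comm ((u : Localization.AtPrime 𝔭)) (ϖ ^ n)] at h5
    have h6 : ϖ ∣ (u : Localization.AtPrime 𝔭) :=
      (mul_dvd_mul_iff_left (pow_ne_zero n hϖ0)).mp h5
    exact hϖ.not_isUnit (isUnit_of_dvd_unit h6 u.isUnit)
  exact ⟨hzero X fun n => (descent n X Y Z W heq).1,
    hzero Y fun n => (descent n X Y Z W heq).2.1,
    hzero Z fun n => (descent n X Y Z W heq).2.2.1,
    hzero W fun n => (descent n X Y Z W heq).2.2.2⟩

end Aux2

/-- Lemma 2 of the paper: if `𝔭` is a nonzero prime of the ring of integers of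
a number field `F`, `a` has `𝔭`-adic valuation exactly 1 (i.e. `a ∈ 𝔭`,
`a ∉ 𝔭²`), and `γ` is not a square modulo `𝔭`, then `ℍ[F, a, γ]` is a
division algebra. -/
theorem quaternionAlgebra_division_of_valuation_one
    (F : Type*) [Field F] [NumberField F]
    (𝔭 : Ideal (𝓞 F)) (hprime : 𝔭.IsPrime) (hbot : 𝔭 ≠ ⊥)
    (a : 𝓞 F) (ha1 : a ∈ 𝔭) (ha2 : a ∉ 𝔭 ^ 2)
    (γ : 𝓞 F) (hγ : ¬ IsSquare (Ideal.Quotient.mk 𝔭 γ)) :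
    ∀ q : ℍ[F, (a : F), (γ : F)], q ≠ 0 → IsUnit q := by
  haveI := hprime
  intro q hq
  set x := q.re with hx
  set y := q.imI with hy
  set z := q.imJ with hz
  set w := q.imK with hw
  set n : F := x ^ 2 - (a : F) * y ^ 2 - (γ : F) * z ^ 2 + (a : F) * (γ : F) * w ^ 2 with hn
  have hn0 : n ≠ 0 := by
    intro h0
    obtain ⟨d, hd⟩ := IsLocalization.exist_integer_multiples_of_finite
      (nonZeroDivisors (𝓞 F)) (S := F) ![x, y, z, w]
    obtain ⟨X, hX⟩ := hd 0
    obtain ⟨Y, hY⟩ := hd 1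
    obtain ⟨Z, hZ⟩ := hd 2
    obtain ⟨W, hW⟩ := hd 3
    simp only [Matrix.cons_val_zero, Matrix.cons_val_one, Matrix.head_cons,
      Matrix.cons_val_two, Matrix.tail_cons, Matrix.cons_val_three] at hX hY hZ hW
    rw [Algebra.smul_def] at hX hY hZ hW
    set D : F := algebraMap (𝓞 F) F (d : 𝓞 F) with hD
    have key : algebraMap (𝓞 F) F (X ^ 2 - a * Y ^ 2 - γ * Z ^ 2 + a * γ * W ^ 2)
        = D ^ 2 * n := by
      simp only [map_sub, map_add, map_mul, map_pow]
      rw [hX, hY, hZ, hW, hn]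
      simp only [RingOfIntegers.coe_eq_algebraMap]
      ring
    rw [h0, mul_zero] at key
    have hOeq : X ^ 2 - a * Y ^ 2 - γ * Z ^ 2 + a * γ * W ^ 2 = 0 :=
      IsFractionRing.injective (𝓞 F) F (by rw [key, map_zero])
    set ψ := algebraMap (𝓞 F) (Localization.AtPrime 𝔭) with hψ
    have hψeq : ψ X ^ 2 - ψ a * ψ Y ^ 2 - ψ γ * ψ Z ^ 2 + ψ a * ψ γ * ψ W ^ 2 = 0 := by
      have := congrArg ψ hOeq
      simpa only [map_sub, map_add, map_mul, map_pow, map_zero] using this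
    obtain ⟨hX0, hY0, hZ0, hW0⟩ := aux_claimR 𝔭 hbot ha1 ha2 hγ (ψ X) (ψ Y) (ψ Z) (ψ W) hψeq
    have hinjψ : Function.Injective ψ :=
      IsLocalization.injective _ 𝔭.primeCompl_le_nonZeroDivisors
    have hXz : X = 0 := hinjψ (by rw [hX0, map_zero])
    have hYz : Y = 0 := hinjψ (by rw [hY0, map_zero])
    have hZz : Z = 0 := hinjψ (by rw [hZ0, map_zero])
    have hWz : W = 0 := hinjψ (by rw [hW0, map_zero])
    have hDne : D ≠ 0 :=
      IsFractionRing.to_map_ne_zero_of_mem_nonZeroDivisors d.prop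
    have hxz : x = 0 := by
      have := hX; rw [hXz, map_zero] at this
      rcases mul_eq_zero.mp this.symm with h | h
      · exact absurd h hDne
      · exact h
    have hyz : y = 0 := by
      have := hY; rw [hYz, map_zero] at this
      rcases mul_eq_zero.mp this.symm with h | h
      · exact absurd h hDne
      · exact h
    have hzz : z = 0 := by
      have := hZ; rw [hZz, map_zero] at this
      rcases mul_eq_zero.mp this.symm with h | h
      · exact absurd h hDne
      · exact h
    have hwz : w = 0 := by
      have := hW; rw [hWz, map_zero] at this
      rcases mul_eq_zero.mp this.symm with h | h
      · exact absurd h hDne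
      · exact h
    apply hq
    ext
    · rw [← hx, hxz]; rfl
    · rw [← hy, hyz]; rfl
    · rw [← hz, hzz]; rfl
    · rw [← hw, hwz]; rfl
  have h1 : q * star q = (n : ℍ[F, (a : F), (γ : F)]) := by
    ext <;>
      simp only [QuaternionAlgebra.re_mul, QuaternionAlgebra.imI_mul,
        QuaternionAlgebra.imJ_mul, QuaternionAlgebra.imK_mul,
        QuaternionAlgebra.re_star, QuaternionAlgebra.imI_star,
        QuaternionAlgebra.imJ_star, QuaternionAlgebra.imK_star,
        QuaternionAlgebra.re_coe, QuaternionAlgebra.imI_coe,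
        QuaternionAlgebra.imJ_coe, QuaternionAlgebra.imK_coe, hn,
        ← hx, ← hy, ← hz, ← hw] <;>
      ring
  have h2 : star q * q = (n : ℍ[F, (a : F), (γ : F)]) := by
    ext <;>
      simp only [QuaternionAlgebra.re_mul, QuaternionAlgebra.imI_mul,
        QuaternionAlgebra.imJ_mul, QuaternionAlgebra.imK_mul,
        QuaternionAlgebra.re_star, QuaternionAlgebra.imI_star,
        QuaternionAlgebra.imJ_star, QuaternionAlgebra.imK_star,
        QuaternionAlgebra.re_coe, QuaternionAlgebra.imI_coe,
        QuaternionAlgebra.imJ_coe, QuaternionAlgebra.imK_coe, hn,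
        ← hx, ← hy, ← hz, ← hw] <;>
      ring
  refine ⟨⟨q, (n⁻¹ : F) • star q, ?_, ?_⟩, rfl⟩
  · rw [mul_smul_comm, h1]
    ext <;> simp [inv_mul_cancel₀ hn0]
  · rw [smul_mul_assoc, h2]
    ext <;> simp [inv_mul_cancel₀ hn0]
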